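/- Under the hole-punching graph-cluster randomization design with 0 < p_t < 1 and 0 < p_hp < 1, for t1 ≠ t2 in {0,1} the covariance of the Horvitz–Thompson estimators satisfies Cov[μ̂(t1), μ̂(t2)] = (1/N²)·[ (p(t1,t2)/(p(t1)·p(t2)) − 1)·Σ_{c∈𝒞} S_c(t1,t2) − (p(t1,t2)/(p(t1)·p(t2)))·Q(t1,t2) ]. -/

import Mathlib

open MeasureTheory ProbabilityTheory

/-- The Bernoulli measure on `Bool` with success probability `p`. -/
noncomputable def bernoulliMeasureBool (p : ℝ) : Measure Bool :=
  ENNReal.ofReal p • Measure.dirac true + ENNReal.ofReal (1 - p) • Measure.dirac false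

instance bernoulliMeasureBool.instIsFiniteMeasure (p : ℝ) :
    IsFiniteMeasure (bernoulliMeasureBool p) where
  measure_univ_lt_top := by
    simp [bernoulliMeasureBool]

/-- The hole-punching graph-cluster randomization design measure on the product space
`(C → Bool) × (Fin N → Bool)`: i.i.d. Bernoulli(`pt`) cluster-level assignments and
i.i.d. Bernoulli(`php`) unit-level flips, all mutually independent. -/
noncomputable def designMeasure (C : Type*) [Fintype C] (N : ℕ) (pt php : ℝ) :
    Measure ((C → Bool) × (Fin N → Bool)) :=
  (Measure.pi fun _ : C => bernoulliMeasureBool pt).prod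
    (Measure.pi fun _ : Fin N => bernoulliMeasureBool php)

/-- The treatment `Z_i` of unit `i`: cluster assignment XOR individual flip. -/
def treat {C : Type*} {N : ℕ} (c : Fin N → C) (i : Fin N)
    (ω : (C → Bool) × (Fin N → Bool)) : Bool :=
  xor (ω.1 (c i)) (ω.2 i)

/-- The marginal propensity `p_i(t) = Pr(Z_i = t)`. -/
noncomputable def margProp {C : Type*} [Fintype C] {N : ℕ} (pt php : ℝ) (c : Fin N → C)
    (i : Fin N) (t : Bool) : ℝ :=
  (designMeasure C N pt php {ω | treat c i ω = t}).toReal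

/-- The joint propensity `p_{ij}(t₁,t₂) = Pr(Z_i = t₁ ∧ Z_j = t₂)`. -/
noncomputable def jointProp {C : Type*} [Fintype C] {N : ℕ} (pt php : ℝ) (c : Fin N → C)
    (i j : Fin N) (t1 t2 : Bool) : ℝ :=
  (designMeasure C N pt php {ω | treat c i ω = t1 ∧ treat c j ω = t2}).toReal

/-- The Horvitz–Thompson estimator `μ̂(t)`. -/
noncomputable def htEst {C : Type*} [Fintype C] {N : ℕ} (pt php : ℝ) (c : Fin N → C)
    (Y : Fin N → Bool → ℝ) (t : Bool) (ω : (C → Bool) × (Fin N → Bool)) : ℝ :=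
  (1 / (N : ℝ)) * ∑ i, if treat c i ω = t then Y i t / margProp pt php c i t else 0

/-- The covariance of two real random variables: `Cov[X,Y] = E[(X − E X)(Y − E Y)]`. -/
noncomputable def cov {Ω : Type*} [MeasurableSpace Ω] (P : Measure Ω) (X Y : Ω → ℝ) : ℝ :=
  ∫ ω, (X ω - ∫ x, X x ∂P) * (Y ω - ∫ x, Y x ∂P) ∂P

section Aux

lemma xor_eq_iff' (a x t : Bool) : (xor a x = t) ↔ (x = xor a t) := by
  cases a <;> cases x <;> cases t <;> decide

noncomputable def wr (p : ℝ) (b : Bool) : ℝ := if b then p else 1 - p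

lemma wr_nonneg {p : ℝ} (h0 : 0 ≤ p) (h1 : p ≤ 1) (b : Bool) : 0 ≤ wr p b := by
  cases b <;> simp [wr] <;> linarith

lemma bern_singleton (p : ℝ) (b : Bool) :
    bernoulliMeasureBool p {b} = ENNReal.ofReal (wr p b) := by
  cases b <;> simp [bernoulliMeasureBool, wr]

lemma bern_isProb {p : ℝ} (h0 : 0 ≤ p) (h1 : p ≤ 1) :
    IsProbabilityMeasure (bernoulliMeasureBool p) := by
  constructor
  simp [bernoulliMeasureBool]
  rw [← ENNReal.ofReal_add h0 (by linarith)]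
  norm_num

lemma pi_single {ι : Type*} [Fintype ι] [DecidableEq ι] (μ : Measure Bool)
    [IsProbabilityMeasure μ] (k : ι) (a : Bool) :
    Measure.pi (fun _ : ι => μ) {f | f k = a} = μ {a} := by
  have hs : {f : ι → Bool | f k = a} =
      Set.univ.pi (fun k' => if k' = k then {a} else Set.univ) := by
    ext f
    simp only [Set.mem_setOf_eq, Set.mem_pi, Set.mem_univ, true_implies]
    constructor
    · intro h k'; by_cases e : k' = k <;> simp [e, h]
    · intro h; have := h k; simpa using this
  rw [hs, Measure.pi_pi]
  rw [← Finset.mul_prod_erase Finset.univ _ (Finset.mem_univ k), if_pos rfl]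
  rw [Finset.prod_eq_one, mul_one]
  intro x hx
  rw [if_neg (Finset.ne_of_mem_erase hx)]
  exact measure_univ

lemma pi_pair {ι : Type*} [Fintype ι] [DecidableEq ι] (μ : Measure Bool)
    [IsProbabilityMeasure μ] {k1 k2 : ι} (hk : k1 ≠ k2) (a b : Bool) :
    Measure.pi (fun _ : ι => μ) {f | f k1 = a ∧ f k2 = b} = μ {a} * μ {b} := by
  have hs : {f : ι → Bool | f k1 = a ∧ f k2 = b} =
      Set.univ.pi (fun k' => if k' = k1 then {a} else if k' = k2 then ({b} : Set Bool)
        else Set.univ) := by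
    ext f
    simp only [Set.mem_setOf_eq, Set.mem_pi, Set.mem_univ, true_implies]
    constructor
    · rintro ⟨h1, h2⟩ k'
      by_cases e1 : k' = k1
      · simp [e1, h1]
      · by_cases e2 : k' = k2 <;> simp [e1, e2, h2, hk.symm]
    · intro h
      refine ⟨?_, ?_⟩
      · have := h k1; simpa using this
      · have := h k2; simpa [hk.symm] using this
  rw [hs, Measure.pi_pi]
  rw [← Finset.mul_prod_erase Finset.univ _ (Finset.mem_univ k1), if_pos rfl]
  rw [← Finset.mul_prod_erase _ _ (Finset.mem_erase.mpr ⟨hk.symm, Finset.mem_univ k2⟩)]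
  rw [if_neg hk.symm, if_pos rfl]
  rw [Finset.prod_eq_one, mul_one]
  intro x hx
  have hx2 : x ≠ k2 := Finset.ne_of_mem_erase hx
  have hx1 : x ≠ k1 := Finset.ne_of_mem_erase (Finset.mem_of_mem_erase hx)
  rw [if_neg hx1, if_neg hx2]
  exact measure_univ

end Aux

section Aux2
open MeasureTheory

variable {C : Type*} [Fintype C] [DecidableEq C] {N : ℕ}

lemma margProp_val {pt php : ℝ} (hpt0 : 0 ≤ pt) (hpt1 : pt ≤ 1) (hphp0 : 0 ≤ php)
    (hphp1 : php ≤ 1) (c : Fin N → C) (i : Fin N) (t : Bool) :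
    margProp pt php c i t
      = wr pt true * wr php (xor true t) + wr pt false * wr php (xor false t) := by
  haveI h1 := bern_isProb hpt0 hpt1
  haveI h2 := bern_isProb hphp0 hphp1
  have hset : {ω : (C → Bool) × (Fin N → Bool) | treat c i ω = t} =
      ⋃ a : Bool, ({b : C → Bool | b (c i) = a} ×ˢ {f : Fin N → Bool | f i = xor a t}) := by
    ext ω
    simp only [Set.mem_setOf_eq, Set.mem_iUnion, Set.mem_prod, treat]
    constructor
    · intro h
      exact ⟨ω.1 (c i), rfl, (xor_eq_iff' _ _ _).mp h⟩
    · rintro ⟨a, h1, h2⟩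
      rw [h1]
      exact (xor_eq_iff' _ _ _).mpr h2
  unfold margProp
  rw [hset, measure_iUnion, tsum_fintype, Fintype.sum_bool]
  · have hval : ∀ a : Bool,
        designMeasure C N pt php
          ({b : C → Bool | b (c i) = a} ×ˢ {f : Fin N → Bool | f i = xor a t})
          = ENNReal.ofReal (wr pt a * wr php (xor a t)) := by
      intro a
      unfold designMeasure
      rw [Measure.prod_prod, pi_single, pi_single, bern_singleton, bern_singleton,
        ← ENNReal.ofReal_mul (wr_nonneg hpt0 hpt1 a)]
    rw [hval, hval, ← ENNReal.ofReal_add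
      (mul_nonneg (wr_nonneg hpt0 hpt1 _) (wr_nonneg hphp0 hphp1 _))
      (mul_nonneg (wr_nonneg hpt0 hpt1 _) (wr_nonneg hphp0 hphp1 _)),
      ENNReal.toReal_ofReal]
    exact add_nonneg (mul_nonneg (wr_nonneg hpt0 hpt1 _) (wr_nonneg hphp0 hphp1 _)) (mul_nonneg (wr_nonneg hpt0 hpt1 _) (wr_nonneg hphp0 hphp1 _))
  · intro a b hab
    rw [Function.onFun]
    apply Set.disjoint_left.mpr
    rintro ω ⟨ha, -⟩ ⟨hb, -⟩
    exact hab (ha ▸ hb ▸ rfl)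
  · intro a
    exact (Set.toFinite _).measurableSet


lemma margProp_pos {pt php : ℝ} (hpt0 : 0 < pt) (hpt1 : pt < 1) (hphp0 : 0 < php)
    (hphp1 : php < 1) (c : Fin N → C) (i : Fin N) (t : Bool) :
    0 < margProp pt php c i t := by
  rw [margProp_val hpt0.le hpt1.le hphp0.le hphp1.le]
  cases t <;> simp [wr] <;> nlinarith

lemma jointProp_self {pt php : ℝ} (c : Fin N → C) (i : Fin N) {t1 t2 : Bool}
    (ht : t1 ≠ t2) : jointProp pt php c i i t1 t2 = 0 := by
  unfold jointProp
  have hset : {ω : (C → Bool) × (Fin N → Bool) | treat c i ω = t1 ∧ treat c i ω = t2}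
      = ∅ := by
    ext ω
    simp only [Set.mem_setOf_eq, Set.mem_empty_iff_false, iff_false, not_and]
    intro h1 h2
    exact ht (h1.symm.trans h2)
  rw [hset]
  simp

lemma jointProp_indep {pt php : ℝ} (hpt0 : 0 ≤ pt) (hpt1 : pt ≤ 1) (hphp0 : 0 ≤ php)
    (hphp1 : php ≤ 1) (c : Fin N → C) {i j : Fin N} (hc : c i ≠ c j) (t1 t2 : Bool) :
    jointProp pt php c i j t1 t2 = margProp pt php c i t1 * margProp pt php c j t2 := by
  haveI h1 := bern_isProb hpt0 hpt1
  haveI h2 := bern_isProb hphp0 hphp1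
  have hij : i ≠ j := fun h => hc (h ▸ rfl)
  have hset : {ω : (C → Bool) × (Fin N → Bool) | treat c i ω = t1 ∧ treat c j ω = t2} =
      ⋃ q : Bool × Bool, ({b : C → Bool | b (c i) = q.1 ∧ b (c j) = q.2} ×ˢ
        {f : Fin N → Bool | f i = xor q.1 t1 ∧ f j = xor q.2 t2}) := by
    ext ω
    simp only [Set.mem_setOf_eq, Set.mem_iUnion, Set.mem_prod, treat]
    constructor
    · rintro ⟨h1, h2⟩
      exact ⟨(ω.1 (c i), ω.1 (c j)), ⟨rfl, rfl⟩,
        (xor_eq_iff' _ _ _).mp h1, (xor_eq_iff' _ _ _).mp h2⟩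
    · rintro ⟨q, ⟨e1, e2⟩, f1, f2⟩
      rw [e1, e2]
      exact ⟨(xor_eq_iff' _ _ _).mpr f1, (xor_eq_iff' _ _ _).mpr f2⟩
  have hval : ∀ q : Bool × Bool,
      designMeasure C N pt php
        ({b : C → Bool | b (c i) = q.1 ∧ b (c j) = q.2} ×ˢ
          {f : Fin N → Bool | f i = xor q.1 t1 ∧ f j = xor q.2 t2})
        = ENNReal.ofReal ((wr pt q.1 * wr php (xor q.1 t1)) *
            (wr pt q.2 * wr php (xor q.2 t2))) := by
    intro q
    unfold designMeasure
    rw [Measure.prod_prod, pi_pair _ hc, pi_pair _ hij, bern_singleton, bern_singleton,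
      bern_singleton, bern_singleton,
      ← ENNReal.ofReal_mul (wr_nonneg hpt0 hpt1 _),
      ← ENNReal.ofReal_mul (wr_nonneg hphp0 hphp1 _),
      ← ENNReal.ofReal_mul (mul_nonneg (wr_nonneg hpt0 hpt1 _) (wr_nonneg hpt0 hpt1 _))]
    congr 1
    ring
  unfold jointProp
  rw [hset, measure_iUnion, tsum_fintype]
  · rw [ENNReal.toReal_sum (fun q _ => by rw [hval]; exact ENNReal.ofReal_ne_top)]
    have : ∀ q : Bool × Bool,
        (designMeasure C N pt php
          ({b : C → Bool | b (c i) = q.1 ∧ b (c j) = q.2} ×ˢ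
            {f : Fin N → Bool | f i = xor q.1 t1 ∧ f j = xor q.2 t2})).toReal
          = (wr pt q.1 * wr php (xor q.1 t1)) * (wr pt q.2 * wr php (xor q.2 t2)) := by
      intro q
      rw [hval, ENNReal.toReal_ofReal]
      exact mul_nonneg (mul_nonneg (wr_nonneg hpt0 hpt1 _) (wr_nonneg hphp0 hphp1 _))
        (mul_nonneg (wr_nonneg hpt0 hpt1 _) (wr_nonneg hphp0 hphp1 _))
    rw [Finset.sum_congr rfl (fun q _ => this q)]
    rw [margProp_val hpt0 hpt1 hphp0 hphp1, margProp_val hpt0 hpt1 hphp0 hphp1]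
    rw [Fintype.sum_prod_type, Fintype.sum_bool]
    rw [Fintype.sum_bool, Fintype.sum_bool]
    ring
  · intro q q' hqq
    rw [Function.onFun]
    apply Set.disjoint_left.mpr
    rintro ω ⟨⟨a1, a2⟩, -⟩ ⟨⟨b1, b2⟩, -⟩
    exact hqq (Prod.ext (a1 ▸ b1 ▸ rfl) (a2 ▸ b2 ▸ rfl))
  · intro q
    exact (Set.toFinite _).measurableSet


lemma integral_ite_prop {Ω : Type*} [MeasurableSpace Ω] [Finite Ω]
    [MeasurableSingletonClass Ω] (P : Measure Ω) [IsFiniteMeasure P]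
    (q : Ω → Prop) [DecidablePred q] (a : ℝ) :
    ∫ ω, (if q ω then a else 0) ∂P = (P {ω | q ω}).toReal * a := by
  have : (fun ω => if q ω then a else 0) = Set.indicator {ω | q ω} (fun _ => a) := by
    funext ω
    by_cases h : q ω <;> simp [Set.indicator_apply, h]
  rw [this, integral_indicator_const a (Set.toFinite _).measurableSet, smul_eq_mul]
  rfl

lemma cov_eq_moments {Ω : Type*} [MeasurableSpace Ω] [Finite Ω]
    [MeasurableSingletonClass Ω] (P : Measure Ω) [IsProbabilityMeasure P] (X Y : Ω → ℝ) :
    cov P X Y = (∫ ω, X ω * Y ω ∂P) - (∫ ω, X ω ∂P) * (∫ ω, Y ω ∂P) := by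
  unfold cov
  set a := ∫ x, X x ∂P with ha
  set b := ∫ x, Y x ∂P with hb
  have h1 : ∀ ω, (X ω - a) * (Y ω - b) = (X ω * Y ω - (a * Y ω + b * X ω)) + a * b := by
    intro ω; ring
  simp_rw [h1]
  rw [integral_add (Integrable.of_finite) (integrable_const _),
    integral_sub (Integrable.of_finite) (Integrable.of_finite),
    integral_add (Integrable.of_finite) (Integrable.of_finite),
    integral_const_mul, integral_const_mul, integral_const]
  simp only [probReal_univ, measure_univ, ENNReal.toReal_one, one_smul, ← ha, ← hb]
  ring

lemma sum_fiber_double {M : Type*} [AddCommMonoid M] (c : Fin N → C)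
    (g : Fin N → Fin N → M) :
    (∑ k : C, ∑ i ∈ Finset.univ.filter (fun i => c i = k),
        ∑ j ∈ Finset.univ.filter (fun j => c j = k), g i j)
      = ∑ i, ∑ j ∈ Finset.univ.filter (fun j => c j = c i), g i j := by
  rw [← Finset.sum_fiberwise Finset.univ c
    (fun i => ∑ j ∈ Finset.univ.filter (fun j => c j = c i), g i j)]
  apply Finset.sum_congr rfl
  intro k _
  apply Finset.sum_congr rfl
  intro i hi
  rw [Finset.mem_filter] at hi
  rw [hi.2]

end Aux2

/-- Under the hole-punching graph-cluster randomization design with `0 < p_t < 1` and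
`0 < p_hp < 1`, for `t1 ≠ t2` in `{0,1}` the covariance of the Horvitz–Thompson
estimators satisfies
`Cov[μ̂(t1), μ̂(t2)] = (1/N²)·[(p(t1,t2)/(p(t1)·p(t2)) − 1)·Σ_c S_c(t1,t2)
− (p(t1,t2)/(p(t1)·p(t2)))·Q(t1,t2)]`, where `p(t)` is the common marginal propensity,
`p(t1,t2)` is the common joint propensity of distinct units in the same cluster,
`S_c(t1,t2) = Σ_{i∈c} Σ_{j∈c} Y_i(t1)·Y_j(t2)` and `Q(t1,t2) = Σ_i Y_i(t1)·Y_i(t2)`. -/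
theorem ht_covariance_design
    {C : Type*} [Fintype C] [DecidableEq C] {N : ℕ} (hN : 1 ≤ N)
    (pt php : ℝ) (hpt0 : 0 < pt) (hpt1 : pt < 1) (hphp0 : 0 < php) (hphp1 : php < 1)
    (c : Fin N → C) (Y : Fin N → Bool → ℝ)
    (p : Bool → ℝ) (hp : ∀ (i : Fin N) (t : Bool), margProp pt php c i t = p t)
    (pj : Bool → Bool → ℝ)
    (hpj : ∀ (i j : Fin N) (t1 t2 : Bool), i ≠ j → c i = c j →
      jointProp pt php c i j t1 t2 = pj t1 t2)
    (t1 t2 : Bool) (ht : t1 ≠ t2) :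
    cov (designMeasure C N pt php) (htEst pt php c Y t1) (htEst pt php c Y t2)
      = (1 / (N : ℝ) ^ 2) *
          ((pj t1 t2 / (p t1 * p t2) - 1) *
              (∑ k : C, ∑ i ∈ Finset.univ.filter (fun i => c i = k),
                ∑ j ∈ Finset.univ.filter (fun j => c j = k), Y i t1 * Y j t2)
            - (pj t1 t2 / (p t1 * p t2)) * ∑ i, Y i t1 * Y i t2) := by
  
  haveI hb1 : IsProbabilityMeasure (bernoulliMeasureBool pt) := bern_isProb hpt0.le hpt1.le
  haveI hb2 : IsProbabilityMeasure (bernoulliMeasureBool php) := bern_isProb hphp0.le hphp1.le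
  haveI hPprob : IsProbabilityMeasure (designMeasure C N pt php) := by
    unfold designMeasure; infer_instance
  have hN0 : (N : ℝ) ≠ 0 := Nat.cast_ne_zero.mpr (by omega)
  have hppos : ∀ t : Bool, 0 < p t := by
    intro t
    rw [← hp ⟨0, hN⟩ t]
    exact margProp_pos hpt0 hpt1 hphp0 hphp1 c ⟨0, hN⟩ t
  have hp1 : p t1 ≠ 0 := (hppos t1).ne'
  have hp2 : p t2 ≠ 0 := (hppos t2).ne'
  have hmean : ∀ t : Bool, (∫ ω, htEst pt php c Y t ω ∂(designMeasure C N pt php))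
      = (1 / (N:ℝ)) * ∑ i, Y i t := by
    intro t
    unfold htEst
    simp_rw [hp]
    rw [integral_const_mul]
    congr 1
    rw [integral_finset_sum _ (fun i _ => Integrable.of_finite)]
    apply Finset.sum_congr rfl
    intro i _
    rw [integral_ite_prop]
    have e1 : (designMeasure C N pt php {ω | treat c i ω = t}).toReal = p t := hp i t
    rw [e1]
    field_simp [(hppos t).ne']
  have hsec : (∫ ω, htEst pt php c Y t1 ω * htEst pt php c Y t2 ω
        ∂(designMeasure C N pt php))
      = (1/(N:ℝ)) * (1/(N:ℝ)) * ∑ i, ∑ j,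
          jointProp pt php c i j t1 t2 * (Y i t1 / p t1 * (Y j t2 / p t2)) := by
    have hfun : ∀ ω, htEst pt php c Y t1 ω * htEst pt php c Y t2 ω
        = (1/(N:ℝ)) * (1/(N:ℝ)) * ∑ i, ∑ j,
            (if treat c i ω = t1 ∧ treat c j ω = t2
              then Y i t1 / p t1 * (Y j t2 / p t2) else 0) := by
      intro ω
      unfold htEst
      simp_rw [hp]
      rw [mul_mul_mul_comm, Finset.sum_mul_sum]
      congr 1
      apply Finset.sum_congr rfl
      intro i _
      apply Finset.sum_congr rfl
      intro j _
      by_cases h1 : treat c i ω = t1 <;> by_cases h2 : treat c j ω = t2 <;>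
        simp [h1, h2]
    simp_rw [hfun]
    rw [integral_const_mul]
    congr 1
    rw [integral_finset_sum _ (fun i _ => Integrable.of_finite)]
    apply Finset.sum_congr rfl
    intro i _
    rw [integral_finset_sum _ (fun j _ => Integrable.of_finite)]
    apply Finset.sum_congr rfl
    intro j _
    rw [integral_ite_prop]
    rfl
  rw [cov_eq_moments, hsec, hmean, hmean]
  have expand : (1/(N:ℝ) * ∑ i, Y i t1) * (1/(N:ℝ) * ∑ i, Y i t2)
      = 1/(N:ℝ) * (1/(N:ℝ)) * ∑ i, ∑ j, Y i t1 * Y j t2 := by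
    rw [mul_mul_mul_comm, Finset.sum_mul_sum]
  rw [expand, ← mul_sub]
  simp_rw [← Finset.sum_sub_distrib]
  have hNN : (1/(N:ℝ)) * (1/(N:ℝ)) = 1/(N:ℝ)^2 := by ring
  rw [hNN]
  congr 1
  have hS : (∑ k : C, ∑ i ∈ Finset.univ.filter (fun i => c i = k),
        ∑ j ∈ Finset.univ.filter (fun j => c j = k), Y i t1 * Y j t2)
      = ∑ i, ∑ j, (if c j = c i then Y i t1 * Y j t2 else 0) := by
    rw [sum_fiber_double c (fun i j => Y i t1 * Y j t2)]
    apply Finset.sum_congr rfl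
    intro i _
    rw [Finset.sum_filter]
  have hQ : (∑ i, Y i t1 * Y i t2)
      = ∑ i, ∑ j, (if j = i then Y i t1 * Y j t2 else 0) := by
    apply Finset.sum_congr rfl
    intro i _
    rw [Finset.sum_ite_eq' Finset.univ i (fun j => Y i t1 * Y j t2)]
    simp
  rw [hS, hQ]
  simp_rw [Finset.mul_sum, ← Finset.sum_sub_distrib]
  apply Finset.sum_congr rfl
  intro i _
  apply Finset.sum_congr rfl
  intro j _
  by_cases hij : j = i
  · subst hij
    rw [jointProp_self c j ht]
    rw [if_pos rfl, if_pos rfl]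
    ring
  · by_cases hc : c j = c i
    · rw [hpj i j t1 t2 (fun h => hij h.symm) hc.symm]
      rw [if_pos hc, if_neg hij]
      field_simp
      ring
    · rw [jointProp_indep hpt0.le hpt1.le hphp0.le hphp1.le c
        (fun h => hc h.symm) t1 t2, hp i t1, hp j t2]
      rw [if_neg hc, if_neg hij]
      field_simp
      ring
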